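/- Let 0 ≤ α < β be real numbers, let S_P and S₀ be C¹ survival functions on [α,β] with hazard rates λ_P := −S_P'/S_P and λ₀ := −S₀'/S₀. Let g_P, g₀ : ℝ → [0,∞) be continuous on [α,β] with ∫_α^β g_P(u) du ≤ 1 and ∫_α^β g₀(u) du ≤ 1, and define G_P(y) := ∫_α^y g_P(u) du, G₀(y) := ∫_α^y g₀(u) du, γ_{P,♮}(y) := ∫_y^β g_P(w)/S_P(w) dw and γ_{0,♮}(y) := ∫_y^β g₀(w)/S₀(w) dw. Let ω : ℝ → ℝ be continuously differentiable on [α,β] and put v := max(sup_{y∈[α,β]} |ω(y)|, ∫_α^β |ω'(y)| dy). Then |∫_α^β ω(y) [ (γ_{P,♮}(y)/S_P(y)) λ_P(y) − (γ_{0,♮}(y)/S₀(y)) λ₀(y) ] dy| ≤ 3 v · sup_{[α,β]} |γ_{P,♮}/S_P − γ_{0,♮}/S₀| + (5 v / S₀(β)³) · sup_{[α,β]} |G_P − G₀| + (2 v / (S_P(β) S₀(β))) · sup_{[α,β]} |1/S_P − 1/S₀|. (Lemma 1(d), with explicit constant.) -/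

import Mathlib

open Set intervalIntegral MeasureTheory Filter

lemma bddAbove_abs_subtype {a b : ℝ} {h : ℝ → ℝ} (hc : ContinuousOn h (Icc a b)) :
    BddAbove (Set.range fun y : Icc a b => |h y.1|) := by
  have : (Set.range fun y : Icc a b => |h y.1|) = (fun x => |h x|) '' Icc a b := by
    ext t
    constructor
    · rintro ⟨⟨y, hy⟩, rfl⟩; exact ⟨y, hy, rfl⟩
    · rintro ⟨y, hy, rfl⟩; exact ⟨⟨y, hy⟩, rfl⟩
  rw [this]
  exact (isCompact_Icc.image_of_continuousOn hc.abs).bddAbove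

lemma le_ciSup_abs {a b : ℝ} {h : ℝ → ℝ} (hc : ContinuousOn h (Icc a b)) {y : ℝ}
    (hy : y ∈ Icc a b) : |h y| ≤ ⨆ z : Icc a b, |h z.1| :=
  le_ciSup (bddAbove_abs_subtype hc) (⟨y, hy⟩ : Icc a b)

lemma ciSup_abs_nonneg {a b : ℝ} (hab : a ≤ b) {h : ℝ → ℝ} (hc : ContinuousOn h (Icc a b)) :
    0 ≤ ⨆ z : Icc a b, |h z.1| :=
  le_trans (abs_nonneg _) (le_ciSup_abs hc (left_mem_Icc.2 hab))

lemma deriv_nonpos_of_antitoneOn {a b : ℝ} (hab : a < b) {f f' : ℝ → ℝ}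
    (hf : ∀ y ∈ Icc a b, HasDerivAt f (f' y) y) (hm : AntitoneOn f (Icc a b)) :
    ∀ y ∈ Icc a b, f' y ≤ 0 := by
  intro y hy
  rcases lt_or_eq_of_le hy.2 with hyb | hyb
  · have ht : Filter.Tendsto (slope f y) (nhdsWithin y (Ioi y)) (nhds (f' y)) :=
      ((hasDerivAt_iff_tendsto_slope.1 (hf y hy)).mono_left
        (nhdsWithin_mono _ (fun z hz => ne_of_gt hz)))
    refine le_of_tendsto ht ?_
    filter_upwards [Ioo_mem_nhdsGT_of_mem ⟨le_refl y, hyb⟩] with z hz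
    have hzI : z ∈ Icc a b := ⟨hy.1.trans hz.1.le, hz.2.le⟩
    have : f z ≤ f y := hm hy hzI hz.1.le
    rw [slope_def_field]
    exact div_nonpos_of_nonpos_of_nonneg (by linarith) (by linarith [hz.1])
  · have hya : a < y := hyb ▸ hab
    have ht : Filter.Tendsto (slope f y) (nhdsWithin y (Iio y)) (nhds (f' y)) :=
      ((hasDerivAt_iff_tendsto_slope.1 (hf y hy)).mono_left
        (nhdsWithin_mono _ (fun z hz => ne_of_lt hz)))
    refine le_of_tendsto ht ?_
    filter_upwards [Ioo_mem_nhdsLT_of_mem ⟨hya, le_refl y⟩] with z hz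
    have hzI : z ∈ Icc a b := ⟨hz.1.le, hz.2.le.trans hy.2⟩
    have : f y ≤ f z := hm hzI hy hz.2.le
    rw [slope_def_field]
    exact div_nonpos_of_nonneg_of_nonpos (by linarith) (by linarith [hz.2])

set_option maxHeartbeats 1000000 in
/-- Lemma 1(d) with explicit constant: bound on the difference of weighted truncation-hazard
integrals in terms of sup-norm differences of `γ♮/S`, `G`, and `1/S`. -/
theorem weighted_truncation_hazard_integral_bound
    (α β : ℝ) (hα : 0 ≤ α) (hαβ : α < β)
    (SP SP' S₀ S₀' gP g₀ ω ω' : ℝ → ℝ)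
    (hSP : ∀ y ∈ Icc α β, HasDerivAt SP (SP' y) y)
    (hSP'c : ContinuousOn SP' (Icc α β))
    (hSPmono : AntitoneOn SP (Icc α β))
    (hSPpos : ∀ y ∈ Icc α β, 0 < SP y ∧ SP y ≤ 1)
    (hS₀ : ∀ y ∈ Icc α β, HasDerivAt S₀ (S₀' y) y)
    (hS₀'c : ContinuousOn S₀' (Icc α β))
    (hS₀mono : AntitoneOn S₀ (Icc α β))
    (hS₀pos : ∀ y ∈ Icc α β, 0 < S₀ y ∧ S₀ y ≤ 1)
    (hgP : ContinuousOn gP (Icc α β)) (hgPnn : ∀ y ∈ Icc α β, 0 ≤ gP y)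
    (hg₀ : ContinuousOn g₀ (Icc α β)) (hg₀nn : ∀ y ∈ Icc α β, 0 ≤ g₀ y)
    (hgPint : (∫ u in α..β, gP u) ≤ 1)
    (hg₀int : (∫ u in α..β, g₀ u) ≤ 1)
    (GP G₀ γP γ₀ : ℝ → ℝ)
    (hGP : ∀ y, GP y = ∫ u in α..y, gP u)
    (hG₀ : ∀ y, G₀ y = ∫ u in α..y, g₀ u)
    (hγP : ∀ y, γP y = ∫ w in y..β, gP w / SP w)
    (hγ₀ : ∀ y, γ₀ y = ∫ w in y..β, g₀ w / S₀ w)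
    (hω : ∀ y ∈ Icc α β, HasDerivAt ω (ω' y) y)
    (hω'c : ContinuousOn ω' (Icc α β))
    (v : ℝ)
    (hv : v = max (⨆ y : Icc α β, |ω y.1|) (∫ y in α..β, |ω' y|)) :
    |∫ y in α..β,
        ω y * ((γP y / SP y) * (-(SP' y) / SP y) - (γ₀ y / S₀ y) * (-(S₀' y) / S₀ y))|
      ≤ 3 * v * (⨆ y : Icc α β, |γP y.1 / SP y.1 - γ₀ y.1 / S₀ y.1|)
        + (5 * v / (S₀ β)^3) * (⨆ y : Icc α β, |GP y.1 - G₀ y.1|)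
        + (2 * v / (SP β * S₀ β)) * (⨆ y : Icc α β, |(SP y.1)⁻¹ - (S₀ y.1)⁻¹|) := by
  have hab : α ≤ β := hαβ.le
  have huIcc : uIcc α β = Icc α β := uIcc_of_le hab
  have hmin : min α β = α := min_eq_left hab
  have hmax : max α β = β := max_eq_right hab
  have hαI : α ∈ Icc α β := left_mem_Icc.2 hab
  have hβI : β ∈ Icc α β := right_mem_Icc.2 hab
  have hSPβ : 0 < SP β := (hSPpos β hβI).1
  have hS₀β : 0 < S₀ β := (hS₀pos β hβI).1
  have hS₀β1 : S₀ β ≤ 1 := (hS₀pos β hβI).2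
  have hSPβ1 : SP β ≤ 1 := (hSPpos β hβI).2
  have hSPlb : ∀ y ∈ Icc α β, SP β ≤ SP y := fun y hy => hSPmono hy hβI hy.2
  have hS₀lb : ∀ y ∈ Icc α β, S₀ β ≤ S₀ y := fun y hy => hS₀mono hy hβI hy.2
  have hSPposy : ∀ y ∈ Icc α β, 0 < SP y := fun y hy => (hSPpos y hy).1
  have hS₀posy : ∀ y ∈ Icc α β, 0 < S₀ y := fun y hy => (hS₀pos y hy).1
  have hSPne : ∀ y ∈ Icc α β, SP y ≠ 0 := fun y hy => (hSPposy y hy).ne'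
  have hS₀ne : ∀ y ∈ Icc α β, S₀ y ≠ 0 := fun y hy => (hS₀posy y hy).ne'
  have hSPc : ContinuousOn SP (Icc α β) := fun y hy => (hSP y hy).continuousAt.continuousWithinAt
  have hS₀c : ContinuousOn S₀ (Icc α β) := fun y hy => (hS₀ y hy).continuousAt.continuousWithinAt
  have hωc : ContinuousOn ω (Icc α β) := fun y hy => (hω y hy).continuousAt.continuousWithinAt
  have hS₀'np : ∀ y ∈ Icc α β, S₀' y ≤ 0 := deriv_nonpos_of_antitoneOn hαβ hS₀ hS₀mono
  have intCI : ∀ {f : ℝ → ℝ}, ContinuousOn f (Icc α β) → IntervalIntegrable f volume α β := by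
    intro f hf
    rw [← huIcc] at hf
    exact hf.intervalIntegrable
  have hqPc : ContinuousOn (fun w => gP w / SP w) (Icc α β) := hgP.div hSPc hSPne
  have hq₀c : ContinuousOn (fun w => g₀ w / S₀ w) (Icc α β) := hg₀.div hS₀c hS₀ne
  -- continuity of the primitives
  have hγPc : ContinuousOn γP (Icc α β) := by
    have h1 : IntegrableOn (fun w => gP w / SP w) (uIcc α β) volume := by
      rw [huIcc]; exact hqPc.integrableOn_Icc
    have h2 := continuousOn_primitive_interval_left (μ := volume) h1
    rw [huIcc] at h2
    exact h2.congr (fun y _ => hγP y)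
  have hγ₀c : ContinuousOn γ₀ (Icc α β) := by
    have h1 : IntegrableOn (fun w => g₀ w / S₀ w) (uIcc α β) volume := by
      rw [huIcc]; exact hq₀c.integrableOn_Icc
    have h2 := continuousOn_primitive_interval_left (μ := volume) h1
    rw [huIcc] at h2
    exact h2.congr (fun y _ => hγ₀ y)
  have hGPc : ContinuousOn GP (Icc α β) := by
    have h1 : IntegrableOn gP (uIcc α β) volume := by
      rw [huIcc]; exact hgP.integrableOn_Icc
    have h2 := continuousOn_primitive_interval (μ := volume) h1
    rw [huIcc] at h2
    exact h2.congr (fun y _ => hGP y)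
  have hG₀c : ContinuousOn G₀ (Icc α β) := by
    have h1 : IntegrableOn g₀ (uIcc α β) volume := by
      rw [huIcc]; exact hg₀.integrableOn_Icc
    have h2 := continuousOn_primitive_interval (μ := volume) h1
    rw [huIcc] at h2
    exact h2.congr (fun y _ => hG₀ y)
  -- interior derivatives of the primitives
  have hγP' : ∀ x ∈ Ioo α β, HasDerivAt γP (-(gP x / SP x)) x := by
    intro x hx
    have hxI : x ∈ Icc α β := Ioo_subset_Icc_self hx
    have hint : IntervalIntegrable (fun w => gP w / SP w) volume x β := by
      apply ContinuousOn.intervalIntegrable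
      apply hqPc.mono
      rw [uIcc_of_le hx.2.le]
      exact Icc_subset_Icc hx.1.le le_rfl
    have hmeas : StronglyMeasurableAtFilter (fun w => gP w / SP w) (nhds x) volume :=
      ⟨Ioo α β, Ioo_mem_nhds hx.1 hx.2,
        (hqPc.mono Ioo_subset_Icc_self).aestronglyMeasurable measurableSet_Ioo⟩
    have hca : ContinuousAt (fun w => gP w / SP w) x :=
      (hqPc x hxI).continuousAt (Icc_mem_nhds hx.1 hx.2)
    have H := intervalIntegral.integral_hasDerivAt_left hint hmeas hca
    exact H.congr_of_eventuallyEq (Filter.Eventually.of_forall fun y => hγP y)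
  have hγ₀' : ∀ x ∈ Ioo α β, HasDerivAt γ₀ (-(g₀ x / S₀ x)) x := by
    intro x hx
    have hxI : x ∈ Icc α β := Ioo_subset_Icc_self hx
    have hint : IntervalIntegrable (fun w => g₀ w / S₀ w) volume x β := by
      apply ContinuousOn.intervalIntegrable
      apply hq₀c.mono
      rw [uIcc_of_le hx.2.le]
      exact Icc_subset_Icc hx.1.le le_rfl
    have hmeas : StronglyMeasurableAtFilter (fun w => g₀ w / S₀ w) (nhds x) volume :=
      ⟨Ioo α β, Ioo_mem_nhds hx.1 hx.2,
        (hq₀c.mono Ioo_subset_Icc_self).aestronglyMeasurable measurableSet_Ioo⟩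
    have hca : ContinuousAt (fun w => g₀ w / S₀ w) x :=
      (hq₀c x hxI).continuousAt (Icc_mem_nhds hx.1 hx.2)
    have H := intervalIntegral.integral_hasDerivAt_left hint hmeas hca
    exact H.congr_of_eventuallyEq (Filter.Eventually.of_forall fun y => hγ₀ y)
  have hGP' : ∀ x ∈ Ioo α β, HasDerivAt GP (gP x) x := by
    intro x hx
    have hxI : x ∈ Icc α β := Ioo_subset_Icc_self hx
    have hint : IntervalIntegrable gP volume α x := by
      apply ContinuousOn.intervalIntegrable
      apply hgP.mono
      rw [uIcc_of_le hx.1.le]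
      exact Icc_subset_Icc le_rfl hx.2.le
    have hmeas : StronglyMeasurableAtFilter gP (nhds x) volume :=
      ⟨Ioo α β, Ioo_mem_nhds hx.1 hx.2,
        (hgP.mono Ioo_subset_Icc_self).aestronglyMeasurable measurableSet_Ioo⟩
    have hca : ContinuousAt gP x := (hgP x hxI).continuousAt (Icc_mem_nhds hx.1 hx.2)
    have H := intervalIntegral.integral_hasDerivAt_right hint hmeas hca
    exact H.congr_of_eventuallyEq (Filter.Eventually.of_forall fun y => hGP y)
  have hG₀' : ∀ x ∈ Ioo α β, HasDerivAt G₀ (g₀ x) x := by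
    intro x hx
    have hxI : x ∈ Icc α β := Ioo_subset_Icc_self hx
    have hint : IntervalIntegrable g₀ volume α x := by
      apply ContinuousOn.intervalIntegrable
      apply hg₀.mono
      rw [uIcc_of_le hx.1.le]
      exact Icc_subset_Icc le_rfl hx.2.le
    have hmeas : StronglyMeasurableAtFilter g₀ (nhds x) volume :=
      ⟨Ioo α β, Ioo_mem_nhds hx.1 hx.2,
        (hg₀.mono Ioo_subset_Icc_self).aestronglyMeasurable measurableSet_Ioo⟩
    have hca : ContinuousAt g₀ x := (hg₀ x hxI).continuousAt (Icc_mem_nhds hx.1 hx.2)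
    have H := intervalIntegral.integral_hasDerivAt_right hint hmeas hca
    exact H.congr_of_eventuallyEq (Filter.Eventually.of_forall fun y => hG₀ y)
  -- the quotient functions and their derivatives
  set ρP : ℝ → ℝ := fun y => γP y / SP y with hρPdef
  set ρ₀ : ℝ → ℝ := fun y => γ₀ y / S₀ y with hρ₀def
  set pP : ℝ → ℝ := fun y => (-(gP y / SP y) * SP y - γP y * SP' y) / SP y ^ 2 with hpPdef
  set p₀ : ℝ → ℝ := fun y => (-(g₀ y / S₀ y) * S₀ y - γ₀ y * S₀' y) / S₀ y ^ 2 with hp₀def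
  have hρPc : ContinuousOn ρP (Icc α β) := hγPc.div hSPc hSPne
  have hρ₀c : ContinuousOn ρ₀ (Icc α β) := hγ₀c.div hS₀c hS₀ne
  have hpPc : ContinuousOn pP (Icc α β) :=
    ((hqPc.neg.mul hSPc).sub (hγPc.mul hSP'c)).div (hSPc.pow 2)
      (fun y hy => pow_ne_zero 2 (hSPne y hy))
  have hp₀c : ContinuousOn p₀ (Icc α β) :=
    ((hq₀c.neg.mul hS₀c).sub (hγ₀c.mul hS₀'c)).div (hS₀c.pow 2)
      (fun y hy => pow_ne_zero 2 (hS₀ne y hy))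
  have hρP' : ∀ x ∈ Ioo α β, HasDerivAt ρP (pP x) x := fun x hx =>
    (hγP' x hx).div (hSP x (Ioo_subset_Icc_self hx)) (hSPne x (Ioo_subset_Icc_self hx))
  have hρ₀' : ∀ x ∈ Ioo α β, HasDerivAt ρ₀ (p₀ x) x := fun x hx =>
    (hγ₀' x hx).div (hS₀ x (Ioo_subset_Icc_self hx)) (hS₀ne x (Ioo_subset_Icc_self hx))
  -- sup norms
  set M1 := ⨆ y : Icc α β, |γP y.1 / SP y.1 - γ₀ y.1 / S₀ y.1| with hM1def
  set M2 := ⨆ y : Icc α β, |GP y.1 - G₀ y.1| with hM2def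
  set M3 := ⨆ y : Icc α β, |(SP y.1)⁻¹ - (S₀ y.1)⁻¹| with hM3def
  have hρPρ₀c : ContinuousOn (fun y => γP y / SP y - γ₀ y / S₀ y) (Icc α β) := hρPc.sub hρ₀c
  have hΔc : ContinuousOn (fun y => GP y - G₀ y) (Icc α β) := hGPc.sub hG₀c
  have hinvc : ContinuousOn (fun y => (SP y)⁻¹ - (S₀ y)⁻¹) (Icc α β) :=
    (hSPc.inv₀ hSPne).sub (hS₀c.inv₀ hS₀ne)
  have hM1 : ∀ y ∈ Icc α β, |ρP y - ρ₀ y| ≤ M1 := fun y hy => le_ciSup_abs hρPρ₀c hy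
  have hM2 : ∀ y ∈ Icc α β, |GP y - G₀ y| ≤ M2 := fun y hy => le_ciSup_abs hΔc hy
  have hM3 : ∀ y ∈ Icc α β, |(SP y)⁻¹ - (S₀ y)⁻¹| ≤ M3 := fun y hy => le_ciSup_abs hinvc hy
  have hM1nn : 0 ≤ M1 := ciSup_abs_nonneg hab hρPρ₀c
  have hM2nn : 0 ≤ M2 := ciSup_abs_nonneg hab hΔc
  have hM3nn : 0 ≤ M3 := ciSup_abs_nonneg hab hinvc
  have hvnn : 0 ≤ v := by
    rw [hv]
    exact le_trans (intervalIntegral.integral_nonneg hab fun u _ => abs_nonneg _)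
      (le_max_right _ _)
  have hωv : ∀ y ∈ Icc α β, |ω y| ≤ v := fun y hy =>
    le_trans (le_ciSup_abs hωc hy) (hv ▸ le_max_left _ _)
  have hω'v : (∫ y in α..β, |ω' y|) ≤ v := hv ▸ le_max_right _ _
  -- decomposition of the integrand
  have hdecomp : ∀ y ∈ Icc α β,
      ω y * ((γP y / SP y) * (-(SP' y) / SP y) - (γ₀ y / S₀ y) * (-(S₀' y) / S₀ y))
        = ω y * (pP y - p₀ y) + ((ω y / S₀ y ^ 2) * (gP y - g₀ y)
          + ω y * gP y * ((SP y ^ 2)⁻¹ - (S₀ y ^ 2)⁻¹)) := by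
    intro y hy
    have h1 := hSPne y hy
    have h2 := hS₀ne y hy
    rw [hpPdef, hp₀def]
    field_simp
    ring
  have hI1 : IntervalIntegrable (fun y => ω y * (pP y - p₀ y)) volume α β :=
    intCI (hωc.mul (hpPc.sub hp₀c))
  have hI2 : IntervalIntegrable (fun y => (ω y / S₀ y ^ 2) * (gP y - g₀ y)) volume α β :=
    intCI (((hωc.div (hS₀c.pow 2) (fun y hy => pow_ne_zero 2 (hS₀ne y hy)))).mul (hgP.sub hg₀))
  have hI3 : IntervalIntegrable (fun y => ω y * gP y * ((SP y ^ 2)⁻¹ - (S₀ y ^ 2)⁻¹)) volume α β :=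
    intCI ((hωc.mul hgP).mul (((hSPc.pow 2).inv₀ fun y hy => pow_ne_zero 2 (hSPne y hy)).sub
      ((hS₀c.pow 2).inv₀ fun y hy => pow_ne_zero 2 (hS₀ne y hy))))
  have hsplit : (∫ y in α..β,
      ω y * ((γP y / SP y) * (-(SP' y) / SP y) - (γ₀ y / S₀ y) * (-(S₀' y) / S₀ y)))
      = (∫ y in α..β, ω y * (pP y - p₀ y))
        + ((∫ y in α..β, (ω y / S₀ y ^ 2) * (gP y - g₀ y))
        + (∫ y in α..β, ω y * gP y * ((SP y ^ 2)⁻¹ - (S₀ y ^ 2)⁻¹))) := by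
    rw [← intervalIntegral.integral_add hI2 hI3, ← intervalIntegral.integral_add hI1 (hI2.add hI3)]
    apply intervalIntegral.integral_congr
    intro y hy
    rw [huIcc] at hy
    exact hdecomp y hy
  -- Term A
  have hAbound : |∫ y in α..β, ω y * (pP y - p₀ y)| ≤ 3 * v * M1 := by
    have hpartsA := intervalIntegral.integral_mul_deriv_eq_deriv_mul_of_hasDeriv_right
      (u := ω) (v := fun y => ρP y - ρ₀ y) (u' := ω') (v' := fun y => pP y - p₀ y)
      (by rw [huIcc]; exact hωc) (by rw [huIcc]; exact hρPc.sub hρ₀c)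
      (by rw [hmin, hmax]; intro x hx;
          exact ((hω x (Ioo_subset_Icc_self hx)).hasDerivWithinAt))
      (by rw [hmin, hmax]; intro x hx;
          exact (((hρP' x hx).sub (hρ₀' x hx)).hasDerivWithinAt))
      (intCI hω'c) (intCI (hpPc.sub hp₀c))
    rw [hpartsA]
    have h1 : |ω β * (ρP β - ρ₀ β)| ≤ v * M1 := by
      rw [abs_mul]
      exact mul_le_mul (hωv β hβI) (hM1 β hβI) (abs_nonneg _) hvnn
    have h2 : |ω α * (ρP α - ρ₀ α)| ≤ v * M1 := by
      rw [abs_mul]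
      exact mul_le_mul (hωv α hαI) (hM1 α hαI) (abs_nonneg _) hvnn
    have h3 : |∫ y in α..β, ω' y * (ρP y - ρ₀ y)| ≤ v * M1 := by
      calc |∫ y in α..β, ω' y * (ρP y - ρ₀ y)|
          ≤ ∫ y in α..β, |ω' y * (ρP y - ρ₀ y)| :=
            intervalIntegral.abs_integral_le_integral_abs hab
        _ ≤ ∫ y in α..β, |ω' y| * M1 := by
            apply intervalIntegral.integral_mono_on hab
              (intCI ((hω'c.mul (hρPc.sub hρ₀c)).abs))
              (intCI (hω'c.abs.mul continuousOn_const))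
            intro y hy
            show |ω' y * (ρP y - ρ₀ y)| ≤ |ω' y| * M1
            rw [abs_mul]
            exact mul_le_mul_of_nonneg_left (hM1 y hy) (abs_nonneg _)
        _ = (∫ y in α..β, |ω' y|) * M1 := intervalIntegral.integral_mul_const _ _
        _ ≤ v * M1 := mul_le_mul_of_nonneg_right hω'v hM1nn
    calc |ω β * (ρP β - ρ₀ β) - ω α * (ρP α - ρ₀ α) - ∫ y in α..β, ω' y * (ρP y - ρ₀ y)|
        ≤ |ω β * (ρP β - ρ₀ β) - ω α * (ρP α - ρ₀ α)|
          + |∫ y in α..β, ω' y * (ρP y - ρ₀ y)| := abs_sub _ _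
      _ ≤ (|ω β * (ρP β - ρ₀ β)| + |ω α * (ρP α - ρ₀ α)|)
          + |∫ y in α..β, ω' y * (ρP y - ρ₀ y)| := by
            exact add_le_add (abs_sub _ _) le_rfl
      _ ≤ 3 * v * M1 := by linarith
  -- Term B
  have hBbound : |∫ y in α..β, (ω y / S₀ y ^ 2) * (gP y - g₀ y)|
      ≤ 5 * v / (S₀ β) ^ 3 * M2 := by
    set uB' : ℝ → ℝ := fun y => ω' y / S₀ y ^ 2 - 2 * ω y * S₀' y / S₀ y ^ 3 with huB'def
    set e₀ : ℝ → ℝ := fun x => -(2 * S₀ x ^ 1 * S₀' x) / (S₀ x ^ 2) ^ 2 with he₀def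
    have hS₀pow2ne : ∀ y ∈ Icc α β, S₀ y ^ 2 ≠ 0 := fun y hy => pow_ne_zero 2 (hS₀ne y hy)
    have huc : ContinuousOn (fun y => ω y / S₀ y ^ 2) (Icc α β) :=
      hωc.div (hS₀c.pow 2) hS₀pow2ne
    have huB'c : ContinuousOn uB' (Icc α β) :=
      (hω'c.div (hS₀c.pow 2) hS₀pow2ne).sub
        (((continuousOn_const.mul hωc).mul hS₀'c).div (hS₀c.pow 3)
          (fun y hy => pow_ne_zero 3 (hS₀ne y hy)))
    have hu' : ∀ x ∈ Icc α β, HasDerivAt (fun y => ω y / S₀ y ^ 2) (uB' x) x := by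
      intro x hx
      have h := (hω x hx).div ((hS₀ x hx).pow 2) (hS₀pow2ne x hx)
      refine h.congr_deriv ?_
      rw [huB'def]
      have hne := hS₀ne x hx
      simp only [Pi.pow_apply, Nat.cast_ofNat]
      field_simp
      ring
    have hΔα : GP α - G₀ α = 0 := by
      rw [hGP, hG₀]
      simp
    have hpartsB := intervalIntegral.integral_mul_deriv_eq_deriv_mul_of_hasDeriv_right
      (u := fun y => ω y / S₀ y ^ 2) (v := fun y => GP y - G₀ y) (u' := uB')
      (v' := fun y => gP y - g₀ y)
      (by rw [huIcc]; exact huc) (by rw [huIcc]; exact hΔc)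
      (by rw [hmin, hmax]; intro x hx;
          exact (hu' x (Ioo_subset_Icc_self hx)).hasDerivWithinAt)
      (by rw [hmin, hmax]; intro x hx;
          exact ((hGP' x hx).sub (hG₀' x hx)).hasDerivWithinAt)
      (intCI huB'c) (intCI (hgP.sub hg₀))
    rw [hpartsB]
    beta_reduce
    rw [hΔα, mul_zero, sub_zero]
    have hInt_e₀ : IntervalIntegrable e₀ volume α β :=
      intCI (((continuousOn_const.mul (hS₀c.pow 1)).mul hS₀'c).neg.div
        ((hS₀c.pow 2).pow 2)
        (fun y hy => pow_ne_zero 2 (hS₀pow2ne y hy)))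
    have hFTC : (∫ y in α..β, e₀ y) = (S₀ β ^ 2)⁻¹ - (S₀ α ^ 2)⁻¹ := by
      apply intervalIntegral.integral_eq_sub_of_hasDerivAt
      · rw [huIcc]
        intro x hx
        exact ((hS₀ x hx).pow 2).inv (hS₀pow2ne x hx)
      · exact hInt_e₀
    have hub' : ∀ y ∈ Icc α β, |uB' y| ≤ |ω' y| / S₀ β ^ 2 + v * e₀ y := by
      intro y hy
      have h1 : 0 < S₀ y := hS₀posy y hy
      have h2 : S₀ β ≤ S₀ y := hS₀lb y hy
      have h3 : S₀' y ≤ 0 := hS₀'np y hy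
      have e₀eq : e₀ y = 2 * -S₀' y / S₀ y ^ 3 := by
        rw [he₀def]
        field_simp
      have habs2 : |2 * ω y * S₀' y| = |ω y| * (2 * -S₀' y) := by
        rw [abs_mul, abs_mul, abs_two, abs_of_nonpos h3]
        ring
      have step1 : |uB' y| ≤ |ω' y| / S₀ y ^ 2 + |ω y| * (2 * -S₀' y) / S₀ y ^ 3 := by
        rw [huB'def]
        refine le_trans (abs_sub _ _) ?_
        rw [abs_div, abs_div, abs_of_pos (pow_pos h1 2), abs_of_pos (pow_pos h1 3), habs2]
      have step2 : |ω' y| / S₀ y ^ 2 ≤ |ω' y| / S₀ β ^ 2 :=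
        div_le_div_of_nonneg_left (abs_nonneg _) (pow_pos hS₀β 2)
          (pow_le_pow_left₀ hS₀β.le h2 2)
      have step3 : |ω y| * (2 * -S₀' y) / S₀ y ^ 3 ≤ v * e₀ y := by
        rw [e₀eq, ← mul_div_assoc]
        exact div_le_div_of_nonneg_right
          (mul_le_mul_of_nonneg_right (hωv y hy) (by linarith)) (pow_pos h1 3).le
      calc |uB' y| ≤ |ω' y| / S₀ y ^ 2 + |ω y| * (2 * -S₀' y) / S₀ y ^ 3 := step1
        _ ≤ |ω' y| / S₀ β ^ 2 + v * e₀ y := add_le_add step2 step3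
    have hInt1 : IntervalIntegrable (fun y => |ω' y| / S₀ β ^ 2) volume α β :=
      intCI (hω'c.abs.div continuousOn_const fun y hy => pow_ne_zero 2 hS₀β.ne')
    have hInt2 : IntervalIntegrable (fun y => v * e₀ y) volume α β :=
      hInt_e₀.const_mul v
    have hintabs : |∫ y in α..β, uB' y * (GP y - G₀ y)|
        ≤ ((∫ y in α..β, |ω' y|) / S₀ β ^ 2
            + v * ((S₀ β ^ 2)⁻¹ - (S₀ α ^ 2)⁻¹)) * M2 := by
      calc |∫ y in α..β, uB' y * (GP y - G₀ y)|
          ≤ ∫ y in α..β, |uB' y * (GP y - G₀ y)| :=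
            intervalIntegral.abs_integral_le_integral_abs hab
        _ ≤ ∫ y in α..β, (|ω' y| / S₀ β ^ 2 + v * e₀ y) * M2 := by
            apply intervalIntegral.integral_mono_on hab
              (intCI ((huB'c.mul hΔc).abs))
              (((hInt1.add hInt2).mul_const M2))
            intro y hy
            show |uB' y * (GP y - G₀ y)| ≤ (|ω' y| / S₀ β ^ 2 + v * e₀ y) * M2
            rw [abs_mul]
            exact mul_le_mul (hub' y hy) (hM2 y hy) (abs_nonneg _)
              (le_trans (abs_nonneg _) (hub' y hy))
        _ = ((∫ y in α..β, |ω' y| / S₀ β ^ 2 + v * e₀ y)) * M2 :=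
            intervalIntegral.integral_mul_const _ _
        _ = ((∫ y in α..β, |ω' y| / S₀ β ^ 2) + ∫ y in α..β, v * e₀ y) * M2 := by
            rw [intervalIntegral.integral_add hInt1 hInt2]
        _ = ((∫ y in α..β, |ω' y|) / S₀ β ^ 2
            + v * ((S₀ β ^ 2)⁻¹ - (S₀ α ^ 2)⁻¹)) * M2 := by
            rw [intervalIntegral.integral_div, intervalIntegral.integral_const_mul, hFTC]
    have hboundβ : |ω β / S₀ β ^ 2 * (GP β - G₀ β)| ≤ v / S₀ β ^ 2 * M2 := by
      rw [abs_mul, abs_div, abs_of_pos (pow_pos hS₀β 2)]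
      exact mul_le_mul (div_le_div_of_nonneg_right (hωv β hβI) (pow_pos hS₀β 2).le)
        (hM2 β hβI) (abs_nonneg _)
        (div_nonneg hvnn (pow_pos hS₀β 2).le)
    have hE : (S₀ β ^ 2)⁻¹ - (S₀ α ^ 2)⁻¹ ≤ (S₀ β ^ 2)⁻¹ :=
      sub_le_self _ (inv_nonneg.2 (pow_pos (hS₀posy α hαI) 2).le)
    have hintabs2 : |∫ y in α..β, uB' y * (GP y - G₀ y)|
        ≤ (v / S₀ β ^ 2 + v / S₀ β ^ 2) * M2 := by
      refine le_trans hintabs (mul_le_mul_of_nonneg_right ?_ hM2nn)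
      have hx1 : (∫ y in α..β, |ω' y|) / S₀ β ^ 2 ≤ v / S₀ β ^ 2 :=
        div_le_div_of_nonneg_right hω'v (pow_pos hS₀β 2).le
      have hx2 : v * ((S₀ β ^ 2)⁻¹ - (S₀ α ^ 2)⁻¹) ≤ v / S₀ β ^ 2 := by
        rw [div_eq_mul_inv]
        exact mul_le_mul_of_nonneg_left hE hvnn
      linarith
    have hfinal : |ω β / S₀ β ^ 2 * (GP β - G₀ β) - ∫ y in α..β, uB' y * (GP y - G₀ y)|
        ≤ 3 * v / S₀ β ^ 2 * M2 := by
      refine le_trans (abs_sub _ _) ?_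
      calc |ω β / S₀ β ^ 2 * (GP β - G₀ β)| + |∫ y in α..β, uB' y * (GP y - G₀ y)|
          ≤ v / S₀ β ^ 2 * M2 + (v / S₀ β ^ 2 + v / S₀ β ^ 2) * M2 :=
            add_le_add hboundβ hintabs2
        _ = 3 * v / S₀ β ^ 2 * M2 := by ring
    refine le_trans hfinal ?_
    have hp32 : S₀ β ^ 3 ≤ S₀ β ^ 2 := pow_le_pow_of_le_one hS₀β.le hS₀β1 (by norm_num)
    have h23 : (S₀ β ^ 2)⁻¹ ≤ (S₀ β ^ 3)⁻¹ := inv_anti₀ (pow_pos hS₀β 3) hp32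
    refine mul_le_mul_of_nonneg_right ?_ hM2nn
    calc 3 * v / S₀ β ^ 2 = 3 * v * (S₀ β ^ 2)⁻¹ := div_eq_mul_inv _ _
      _ ≤ 5 * v * (S₀ β ^ 3)⁻¹ :=
          mul_le_mul (by linarith) h23 (inv_nonneg.2 (pow_pos hS₀β 2).le) (by linarith)
      _ = 5 * v / S₀ β ^ 3 := (div_eq_mul_inv _ _).symm
  -- Term C
  have hCbound : |∫ y in α..β, ω y * gP y * ((SP y ^ 2)⁻¹ - (S₀ y ^ 2)⁻¹)|
      ≤ 2 * v / (SP β * S₀ β) * M3 := by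
    have hc : 0 ≤ v * (M3 * (2 / (SP β * S₀ β))) :=
      mul_nonneg hvnn (mul_nonneg hM3nn (div_nonneg (by norm_num) (mul_pos hSPβ hS₀β).le))
    have i2 : (1:ℝ) ≤ (SP β)⁻¹ := (one_le_inv₀ hSPβ).2 hSPβ1
    have i1 : (1:ℝ) ≤ (S₀ β)⁻¹ := (one_le_inv₀ hS₀β).2 hS₀β1
    have hsumβ : (SP β)⁻¹ + (S₀ β)⁻¹ ≤ 2 / (SP β * S₀ β) := by
      have e : 2 / (SP β * S₀ β) = (SP β)⁻¹ * (S₀ β)⁻¹ + (SP β)⁻¹ * (S₀ β)⁻¹ := by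
        field_simp
        ring
      have t1 : (SP β)⁻¹ ≤ (SP β)⁻¹ * (S₀ β)⁻¹ :=
        le_mul_of_one_le_right (inv_nonneg.2 hSPβ.le) i1
      have t2 : (S₀ β)⁻¹ ≤ (SP β)⁻¹ * (S₀ β)⁻¹ := by
        rw [mul_comm]
        exact le_mul_of_one_le_right (inv_nonneg.2 hS₀β.le) i2
      linarith
    have hD : ∀ y ∈ Icc α β, |(SP y ^ 2)⁻¹ - (S₀ y ^ 2)⁻¹| ≤ M3 * (2 / (SP β * S₀ β)) := by
      intro y hy
      have hSPy := hSPposy y hy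
      have hS₀y := hS₀posy y hy
      have hfac : (SP y ^ 2)⁻¹ - (S₀ y ^ 2)⁻¹
          = ((SP y)⁻¹ - (S₀ y)⁻¹) * ((SP y)⁻¹ + (S₀ y)⁻¹) := by
        field_simp
        ring
      have hsum_pos : 0 < (SP y)⁻¹ + (S₀ y)⁻¹ := by positivity
      have hsum_le : (SP y)⁻¹ + (S₀ y)⁻¹ ≤ 2 / (SP β * S₀ β) := by
        have q1 := inv_anti₀ hSPβ (hSPlb y hy)
        have q2 := inv_anti₀ hS₀β (hS₀lb y hy)
        linarith
      rw [hfac, abs_mul, abs_of_pos hsum_pos]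
      exact mul_le_mul (hM3 y hy) hsum_le hsum_pos.le hM3nn
    calc |∫ y in α..β, ω y * gP y * ((SP y ^ 2)⁻¹ - (S₀ y ^ 2)⁻¹)|
        ≤ ∫ y in α..β, |ω y * gP y * ((SP y ^ 2)⁻¹ - (S₀ y ^ 2)⁻¹)| :=
          intervalIntegral.abs_integral_le_integral_abs hab
      _ ≤ ∫ y in α..β, (v * (M3 * (2 / (SP β * S₀ β)))) * gP y := by
          apply intervalIntegral.integral_mono_on hab
            (intCI (((hωc.mul hgP).mul
              (((hSPc.pow 2).inv₀ fun y hy => pow_ne_zero 2 (hSPne y hy)).sub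
                ((hS₀c.pow 2).inv₀ fun y hy => pow_ne_zero 2 (hS₀ne y hy)))).abs))
            (intCI (continuousOn_const.mul hgP))
          intro y hy
          have heq : |ω y * gP y * ((SP y ^ 2)⁻¹ - (S₀ y ^ 2)⁻¹)|
              = |ω y| * gP y * |(SP y ^ 2)⁻¹ - (S₀ y ^ 2)⁻¹| := by
            rw [abs_mul, abs_mul, abs_of_nonneg (hgPnn y hy)]
          show |ω y * gP y * ((SP y ^ 2)⁻¹ - (S₀ y ^ 2)⁻¹)| ≤ v * (M3 * (2 / (SP β * S₀ β))) * gP y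
          rw [heq]
          calc |ω y| * gP y * |(SP y ^ 2)⁻¹ - (S₀ y ^ 2)⁻¹|
              ≤ v * gP y * (M3 * (2 / (SP β * S₀ β))) :=
              mul_le_mul (mul_le_mul_of_nonneg_right (hωv y hy) (hgPnn y hy)) (hD y hy)
                (abs_nonneg _) (mul_nonneg hvnn (hgPnn y hy))
            _ = (v * (M3 * (2 / (SP β * S₀ β)))) * gP y := by ring
      _ = (v * (M3 * (2 / (SP β * S₀ β)))) * ∫ y in α..β, gP y :=
          intervalIntegral.integral_const_mul _ _
      _ ≤ (v * (M3 * (2 / (SP β * S₀ β)))) * 1 := mul_le_mul_of_nonneg_left hgPint hc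
      _ = 2 * v / (SP β * S₀ β) * M3 := by ring
  rw [hsplit]
  calc |(∫ y in α..β, ω y * (pP y - p₀ y))
        + ((∫ y in α..β, (ω y / S₀ y ^ 2) * (gP y - g₀ y))
        + (∫ y in α..β, ω y * gP y * ((SP y ^ 2)⁻¹ - (S₀ y ^ 2)⁻¹)))|
      ≤ |∫ y in α..β, ω y * (pP y - p₀ y)|
        + (|∫ y in α..β, (ω y / S₀ y ^ 2) * (gP y - g₀ y)|
        + |∫ y in α..β, ω y * gP y * ((SP y ^ 2)⁻¹ - (S₀ y ^ 2)⁻¹)|) :=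
      le_trans (abs_add_le _ _) (add_le_add le_rfl (abs_add_le _ _))
    _ ≤ 3 * v * M1 + (5 * v / (S₀ β) ^ 3 * M2 + 2 * v / (SP β * S₀ β) * M3) := by
        exact add_le_add hAbound (add_le_add hBbound hCbound)
    _ = 3 * v * M1 + 5 * v / (S₀ β) ^ 3 * M2 + 2 * v / (SP β * S₀ β) * M3 := by ring
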